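/- Let A be a real d×d Hurwitz matrix (all eigenvalues of A have strictly negative real part) and ω ∈ ℝ. Then A Ŝ_A(ω) A = −(1/π) A − ω² Ŝ_A(ω). -/

import Mathlib

set_option maxHeartbeats 1000000


open MeasureTheory
open scoped Matrix

/-- The matrix-valued cosine transform `Ŝ_A(ω) = (1/π)∫₀^∞ e^{tA} cos ωt dt`,
defined entrywise. -/
noncomputable def cosTransform {d : ℕ} (A : Matrix (Fin d) (Fin d) ℝ) (ω : ℝ) :
    Matrix (Fin d) (Fin d) ℝ :=
  Matrix.of fun i j => (1 / Real.pi) * ∫ t in Set.Ioi (0 : ℝ),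
    Real.cos (ω * t) * (NormedSpace.exp (t • A)) i j

namespace CosTransformAux

open NormedSpace Filter Set Module Topology
open scoped Nat

variable {d : ℕ}

noncomputable abbrev linftyNR (α : Type) [NormedRing α] : NormedRing (Matrix (Fin d) (Fin d) α) :=
  { (Matrix.linftyOpNormedRing : NormedRing (Matrix (Fin d) (Fin d) α)) with
    toPseudoMetricSpace :=
      (Matrix.linftyOpNormedRing : NormedRing (Matrix (Fin d) (Fin d) α)).toPseudoMetricSpace.replaceUniformity
        rfl }

noncomputable abbrev linftyNA (R α : Type) [NormedField R] [NormedRing α] [NormedAlgebra R α] :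
    @NormedAlgebra R (Matrix (Fin d) (Fin d) α) _ (linftyNR α).toSeminormedRing :=
  letI : NormedRing (Matrix (Fin d) (Fin d) α) := Matrix.linftyOpNormedRing
  { toAlgebra := Matrix.instAlgebra
    norm_smul_le :=
      (Matrix.linftyOpNormedAlgebra : NormedAlgebra R (Matrix (Fin d) (Fin d) α)).norm_smul_le }

attribute [local instance] linftyNR linftyNA

lemma pow_le_exp_aux {δ t : ℝ} (hδ : 0 < δ) (ht : 0 ≤ t) (n : ℕ) :
    δ ^ n * t ^ n ≤ n ! * Real.exp (δ * t) := by
  have h := Real.sum_le_exp_of_nonneg (mul_nonneg hδ.le ht) (n + 1)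
  have h2 : (δ * t) ^ n / n ! ≤ Real.exp (δ * t) :=
    le_trans (Finset.single_le_sum (f := fun i => (δ * t) ^ i / i !)
      (fun i _ => by positivity) (Finset.self_mem_range_succ n)) h
  rw [div_le_iff₀ (by positivity)] at h2
  calc δ ^ n * t ^ n = (δ * t) ^ n := (mul_pow _ _ _).symm
    _ ≤ Real.exp (δ * t) * n ! := h2
    _ = n ! * Real.exp (δ * t) := mul_comm _ _

/-- Multiplication-by-a-vector as a continuous linear map on matrices. -/
noncomputable def mulVecCLM (x : Fin d → ℂ) :
    Matrix (Fin d) (Fin d) ℂ →L[ℂ] (Fin d → ℂ) :=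
  LinearMap.toContinuousLinearMap
    { toFun := fun M => M *ᵥ x
      map_add' := fun M N => Matrix.add_mulVec M N x
      map_smul' := fun c M => Matrix.smul_mulVec c M x }

@[simp] lemma mulVecCLM_apply (x : Fin d → ℂ) (M : Matrix (Fin d) (Fin d) ℂ) :
    mulVecCLM x M = M *ᵥ x := rfl

/-- Decay of `exp (t • B) *ᵥ x` for a generalized eigenvector `x`. -/
lemma decay_on_genEig (B : Matrix (Fin d) (Fin d) ℂ) {μ : ℂ} {k : ℕ} {x : Fin d → ℂ}
    (hx : ((B - μ • 1) ^ k) *ᵥ x = 0) {b : ℝ} (hb : μ.re < b) :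
    ∃ C, 0 ≤ C ∧ ∀ t : ℝ, 0 ≤ t →
      ‖NormedSpace.exp (t • B) *ᵥ x‖ ≤ C * Real.exp (b * t) := by
  set N : Matrix (Fin d) (Fin d) ℂ := B - μ • 1 with hN
  set δ : ℝ := b - μ.re with hδdef
  have hδ : 0 < δ := by simp only [hδdef]; linarith
  refine ⟨∑ n ∈ Finset.range k, (1 / δ) ^ n * ‖N ^ n *ᵥ x‖, by positivity, fun t ht => ?_⟩
  -- rewrite the real smul as a complex smul
  have hsm : t • B = ((t : ℂ) * μ) • (1 : Matrix (Fin d) (Fin d) ℂ) + (t : ℂ) • N := by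
    have h1 : t • B = (t : ℂ) • B := by
      rw [← IsScalarTower.algebraMap_smul ℂ t B]
      norm_num
    rw [h1]
    have hB' : B = N + μ • 1 := by rw [hN]; abel
    rw [hB', smul_add, smul_smul]
    abel
  have hcommute : Commute (((t : ℂ) * μ) • (1 : Matrix (Fin d) (Fin d) ℂ)) ((t : ℂ) • N) :=
    ((Commute.one_left _).smul_left _).smul_right _
  have hexp1 : NormedSpace.exp (((t : ℂ) * μ) • (1 : Matrix (Fin d) (Fin d) ℂ))
      = Complex.exp ((t : ℂ) * μ) • (1 : Matrix (Fin d) (Fin d) ℂ) := by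
    rw [← Algebra.algebraMap_eq_smul_one, ← NormedSpace.algebraMap_exp_comm,
      ← Complex.exp_eq_exp_ℂ, Algebra.algebraMap_eq_smul_one]
  have hkey : NormedSpace.exp (t • B) *ᵥ x
      = Complex.exp ((t : ℂ) * μ) • (NormedSpace.exp ((t : ℂ) • N) *ᵥ x) := by
    rw [hsm, NormedSpace.exp_add_of_commute hcommute, hexp1, smul_mul_assoc, one_mul,
      Matrix.smul_mulVec]
  -- expand exp ((t:ℂ) • N) *ᵥ x as a finite sum
  have hser : NormedSpace.exp ((t : ℂ) • N) *ᵥ x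
      = ∑ n ∈ Finset.range k, ((t : ℂ) ^ n * ((n ! : ℂ))⁻¹) • (N ^ n *ᵥ x) := by
    have h0 : NormedSpace.exp ((t : ℂ) • N) *ᵥ x
        = mulVecCLM x (NormedSpace.exp ((t : ℂ) • N)) := rfl
    rw [h0, NormedSpace.exp_eq_tsum ℂ,
      (mulVecCLM x).map_tsum (NormedSpace.expSeries_summable' (𝕂 := ℂ) ((t : ℂ) • N))]
    have hterm : ∀ n : ℕ, mulVecCLM x (((n ! : ℂ))⁻¹ • ((t : ℂ) • N) ^ n)
        = ((t : ℂ) ^ n * ((n ! : ℂ))⁻¹) • (N ^ n *ᵥ x) := by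
      intro n
      rw [_root_.map_smul, smul_pow]
      simp only [mulVecCLM_apply, Matrix.smul_mulVec, smul_smul]
      rw [mul_comm]
    have hvanish : ∀ n ∉ Finset.range k,
        mulVecCLM x (((n ! : ℂ))⁻¹ • ((t : ℂ) • N) ^ n) = 0 := by
      intro n hn
      rw [Finset.mem_range, not_lt] at hn
      rw [hterm n]
      have : N ^ n *ᵥ x = 0 := by
        have hpow : N ^ n = N ^ (n - k) * N ^ k := by
          rw [← pow_add]; congr 1; omega
        rw [hpow, ← Matrix.mulVec_mulVec, hx, Matrix.mulVec_zero]
      rw [this, smul_zero]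
    rw [tsum_eq_sum hvanish]
    exact Finset.sum_congr rfl fun n _ => hterm n
  rw [hkey, norm_smul, hser]
  have hnexp : ‖Complex.exp ((t : ℂ) * μ)‖ = Real.exp (t * μ.re) := by
    rw [Complex.norm_exp]
    congr 1
    simp [Complex.mul_re]
  rw [hnexp]
  calc Real.exp (t * μ.re) * ‖∑ n ∈ Finset.range k, ((t : ℂ) ^ n * ((n ! : ℂ))⁻¹) • (N ^ n *ᵥ x)‖
      ≤ Real.exp (t * μ.re) * ∑ n ∈ Finset.range k, (t ^ n * ((n !) : ℝ)⁻¹) * ‖N ^ n *ᵥ x‖ := by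
        refine mul_le_mul_of_nonneg_left ?_ (Real.exp_nonneg _)
        refine le_trans (norm_sum_le _ _) (Finset.sum_le_sum fun n _ => ?_)
        rw [norm_smul]
        apply mul_le_mul_of_nonneg_right _ (norm_nonneg _)
        rw [norm_mul, norm_pow, Complex.norm_real, Real.norm_eq_abs, abs_of_nonneg ht]
        simp [Complex.norm_natCast]
    _ = ∑ n ∈ Finset.range k, (t ^ n * ((n !) : ℝ)⁻¹ * Real.exp (t * μ.re)) * ‖N ^ n *ᵥ x‖ := by
        rw [Finset.mul_sum]; exact Finset.sum_congr rfl fun n _ => by ring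
    _ ≤ ∑ n ∈ Finset.range k, ((1 / δ) ^ n * Real.exp (b * t)) * ‖N ^ n *ᵥ x‖ := by
        refine Finset.sum_le_sum fun n _ => ?_
        refine mul_le_mul_of_nonneg_right ?_ (norm_nonneg _)
        have hp := pow_le_exp_aux hδ ht n
        have hfac : (0:ℝ) < (n ! : ℝ) := by positivity
        have hδn : (0:ℝ) < δ ^ n := pow_pos hδ n
        have hexps : Real.exp (b * t) = Real.exp (δ * t) * Real.exp (t * μ.re) := by
          rw [← Real.exp_add]; congr 1; rw [hδdef]; ring
        rw [hexps]
        have h2 : t ^ n ≤ (n ! : ℝ) * Real.exp (δ * t) / δ ^ n := by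
          rw [le_div_iff₀ hδn]; nlinarith [hp]
        calc t ^ n * ((n !) : ℝ)⁻¹ * Real.exp (t * μ.re)
            ≤ ((n ! : ℝ) * Real.exp (δ * t) / δ ^ n) * ((n !) : ℝ)⁻¹ * Real.exp (t * μ.re) := by
              gcongr
          _ = (1 / δ) ^ n * (Real.exp (δ * t) * Real.exp (t * μ.re)) := by
              field_simp
              ring_nf
              rw [← mul_pow, mul_inv_cancel₀ hδ.ne', one_pow]
    _ = (∑ n ∈ Finset.range k, (1 / δ) ^ n * ‖N ^ n *ᵥ x‖) * Real.exp (b * t) := by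
        rw [Finset.sum_mul]; exact Finset.sum_congr rfl fun n _ => by ring

/-- Decay of `exp (t • B) *ᵥ x` for any vector `x`, when the spectrum lies in `re < b`. -/
lemma decay_mulVec (B : Matrix (Fin d) (Fin d) ℂ) {b : ℝ}
    (hB : ∀ μ ∈ spectrum ℂ B, μ.re < b) (x : Fin d → ℂ) :
    ∃ C, 0 ≤ C ∧ ∀ t : ℝ, 0 ≤ t →
      ‖NormedSpace.exp (t • B) *ᵥ x‖ ≤ C * Real.exp (b * t) := by
  have htop := Module.End.iSup_maxGenEigenspace_eq_top (Matrix.toLinAlgEquiv' B)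
  have hx : x ∈ ⨆ μ : ℂ, Module.End.maxGenEigenspace (Matrix.toLinAlgEquiv' B) μ := by
    rw [htop]; trivial
  refine Submodule.iSup_induction (motive := fun y => ∃ C, 0 ≤ C ∧ ∀ t : ℝ, 0 ≤ t →
      ‖NormedSpace.exp (t • B) *ᵥ y‖ ≤ C * Real.exp (b * t)) _ hx ?_ ?_ ?_
  · intro μ y hy
    by_cases hy0 : y = 0
    · exact ⟨0, le_rfl, fun t ht => by simp [hy0, Matrix.mulVec_zero]⟩
    obtain ⟨k, hk⟩ := (Module.End.mem_maxGenEigenspace _ _ _).mp hy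
    have hconv : ((Matrix.toLinAlgEquiv' B - μ • 1) ^ k)
        = Matrix.toLinAlgEquiv' ((B - μ • 1) ^ k) := by
      rw [map_pow, map_sub, _root_.map_smul, map_one]
    have hk' : ((B - μ • 1) ^ k) *ᵥ y = 0 := by
      rw [← Matrix.toLinAlgEquiv'_apply, ← hconv]
      exact hk
    have hμ : μ ∈ spectrum ℂ B := by
      rw [← AlgEquiv.spectrum_eq (Matrix.toLinAlgEquiv' (R := ℂ) (n := Fin d)) B]
      refine Module.End.HasEigenvalue.mem_spectrum ?_
      refine Module.End.hasEigenvalue_of_hasGenEigenvalue (k := k) ?_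
      refine (Submodule.ne_bot_iff _).mpr ⟨y, ?_, hy0⟩
      rw [Module.End.mem_genEigenspace_nat, LinearMap.mem_ker]
      exact hk
    exact decay_on_genEig B hk' (hB μ hμ)
  · exact ⟨0, le_rfl, fun t ht => by simp [Matrix.mulVec_zero]⟩
  · rintro y z ⟨C₁, hC₁, h₁⟩ ⟨C₂, hC₂, h₂⟩
    refine ⟨C₁ + C₂, by positivity, fun t ht => ?_⟩
    rw [Matrix.mulVec_add]
    calc ‖_ + _‖ ≤ ‖NormedSpace.exp (t • B) *ᵥ y‖ + ‖NormedSpace.exp (t • B) *ᵥ z‖ :=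
          norm_add_le _ _
      _ ≤ C₁ * Real.exp (b * t) + C₂ * Real.exp (b * t) := add_le_add (h₁ t ht) (h₂ t ht)
      _ = (C₁ + C₂) * Real.exp (b * t) := by ring

/-- Entrywise decay of `exp (t • B)`. -/
lemma decay_entry (B : Matrix (Fin d) (Fin d) ℂ) {b : ℝ}
    (hB : ∀ μ ∈ spectrum ℂ B, μ.re < b) :
    ∃ C, 0 ≤ C ∧ ∀ t : ℝ, 0 ≤ t → ∀ i j,
      ‖NormedSpace.exp (t • B) i j‖ ≤ C * Real.exp (b * t) := by
  choose Cf h0 hCf using fun j => decay_mulVec B hB (Pi.single j 1)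
  refine ⟨∑ j, Cf j, Finset.sum_nonneg fun j _ => h0 j, fun t ht i j => ?_⟩
  have h1 : NormedSpace.exp (t • B) *ᵥ Pi.single j 1
      = fun i => NormedSpace.exp (t • B) i j * 1 := Matrix.mulVec_single _ _ _
  have h2 : ‖NormedSpace.exp (t • B) i j‖ ≤ ‖NormedSpace.exp (t • B) *ᵥ Pi.single j 1‖ := by
    rw [h1]
    simpa using norm_le_pi_norm (fun i => NormedSpace.exp (t • B) i j * 1) i
  refine h2.trans ((hCf j t ht).trans ?_)
  have : Cf j ≤ ∑ j', Cf j' := Finset.single_le_sum (fun j' _ => h0 j') (Finset.mem_univ j)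
  exact mul_le_mul_of_nonneg_right this (Real.exp_nonneg _)

lemma matrix_norm_le (M : Matrix (Fin d) (Fin d) ℝ) {c : ℝ} (hc : 0 ≤ c)
    (h : ∀ i j, ‖M i j‖ ≤ c) : ‖M‖ ≤ d * c := by
  rw [Matrix.linfty_opNorm_def]
  have hnn : (0:ℝ) ≤ (d : ℝ) * c := by positivity
  have hsup : (Finset.univ : Finset (Fin d)).sup (fun i => ∑ j, ‖M i j‖₊)
      ≤ (⟨(d : ℝ) * c, hnn⟩ : NNReal) := by
    refine Finset.sup_le fun i _ => ?_
    apply NNReal.coe_le_coe.mp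
    push_cast
    calc ∑ j, ‖M i j‖ ≤ ∑ _j : Fin d, c := Finset.sum_le_sum fun j _ => h i j
      _ = (d : ℝ) * c := by simp [mul_comm]
  exact_mod_cast hsup

/-- Norm decay of the real matrix exponential for a Hurwitz matrix. -/
lemma decay_real (A : Matrix (Fin d) (Fin d) ℝ)
    (hA : ∀ μ ∈ spectrum ℂ (A.map Complex.ofReal), μ.re < 0) :
    ∃ C ε : ℝ, 0 ≤ C ∧ 0 < ε ∧ ∀ t : ℝ, 0 ≤ t →
      ‖NormedSpace.exp (t • A)‖ ≤ C * Real.exp (-ε * t) := by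
  set B := A.map Complex.ofReal with hBdef
  obtain ⟨ε, hε, hspec⟩ : ∃ ε : ℝ, 0 < ε ∧ ∀ μ ∈ spectrum ℂ B, μ.re < -ε := by
    rcases (spectrum ℂ B).eq_empty_or_nonempty with h | h
    · exact ⟨1, one_pos, by simp [h]⟩
    · obtain ⟨μ₀, hμ₀mem, hmax⟩ := (spectrum.isCompact B).exists_isMaxOn h
        Complex.continuous_re.continuousOn
      have hμ₀ := hA μ₀ hμ₀mem
      refine ⟨-μ₀.re / 2, by linarith, fun μ hμ => ?_⟩
      have h1 : μ.re ≤ μ₀.re := hmax hμ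
      linarith
  obtain ⟨C, hC0, hC⟩ := decay_entry B hspec
  refine ⟨d * C, ε, by positivity, hε, fun t ht => ?_⟩
  have hmap : (NormedSpace.exp (t • A)).map Complex.ofReal = NormedSpace.exp (t • B) := by
    have hcont : Continuous ((algebraMap ℝ ℂ).mapMatrix :
        Matrix (Fin d) (Fin d) ℝ →+* Matrix (Fin d) (Fin d) ℂ) := by
      show Continuous fun M : Matrix (Fin d) (Fin d) ℝ => M.map (algebraMap ℝ ℂ)
      exact continuous_id.matrix_map (continuous_algebraMap ℝ ℂ)
    have h1 := NormedSpace.map_exp ((algebraMap ℝ ℂ).mapMatrix) hcont (t • A)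
    have h2 : ((algebraMap ℝ ℂ).mapMatrix) (t • A) = t • B := by
      ext i j
      simp only [RingHom.mapMatrix_apply, Matrix.map_apply, Matrix.smul_apply, hBdef,
        smul_eq_mul, Complex.real_smul, Complex.ofReal_mul, Complex.coe_algebraMap]
    have h3 : (NormedSpace.exp : Matrix (Fin d) (Fin d) ℂ → _) = NormedSpace.exp :=
      rfl
    calc (NormedSpace.exp (t • A)).map Complex.ofReal
        = ((algebraMap ℝ ℂ).mapMatrix) (NormedSpace.exp (t • A)) := rfl
      _ = NormedSpace.exp (((algebraMap ℝ ℂ).mapMatrix) (t • A)) := h1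
      _ = NormedSpace.exp (t • B) := by rw [h2, h3]
  have hent : ∀ i j, ‖NormedSpace.exp (t • A) i j‖ ≤ C * Real.exp (-ε * t) := by
    intro i j
    have := hC t ht i j
    rw [← hmap] at this
    simpa [Matrix.map_apply, Complex.norm_real] using this
  have := matrix_norm_le (NormedSpace.exp (t • A))
    (c := C * Real.exp (-ε * t)) (by positivity) hent
  calc ‖NormedSpace.exp (t • A)‖ ≤ (d : ℝ) * (C * Real.exp (-ε * t)) := this
    _ = (d * C) * Real.exp (-ε * t) := by ring

lemma integrableOn_of_decay {h : ℝ → Matrix (Fin d) (Fin d) ℝ} (hcont : Continuous h)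
    {C ε : ℝ} (hε : 0 < ε) (hb : ∀ t : ℝ, 0 ≤ t → ‖h t‖ ≤ C * Real.exp (-ε * t)) :
    IntegrableOn h (Set.Ioi (0:ℝ)) := by
  refine Integrable.mono' ((exp_neg_integrableOn_Ioi 0 hε).const_mul C)
    hcont.aestronglyMeasurable.restrict ?_
  rw [ae_restrict_iff' measurableSet_Ioi]
  exact ae_of_all _ fun t ht => hb t (le_of_lt ht)

noncomputable def mulLeftCLM (A : Matrix (Fin d) (Fin d) ℝ) :
    Matrix (Fin d) (Fin d) ℝ →L[ℝ] Matrix (Fin d) (Fin d) ℝ :=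
  LinearMap.toContinuousLinearMap (LinearMap.mulLeft ℝ A)

noncomputable def mulRightCLM (A : Matrix (Fin d) (Fin d) ℝ) :
    Matrix (Fin d) (Fin d) ℝ →L[ℝ] Matrix (Fin d) (Fin d) ℝ :=
  LinearMap.toContinuousLinearMap (LinearMap.mulRight ℝ A)

noncomputable def entryCLM (i j : Fin d) : Matrix (Fin d) (Fin d) ℝ →L[ℝ] ℝ :=
  LinearMap.toContinuousLinearMap (Matrix.entryLinearMap ℝ ℝ i j)

@[simp] lemma mulLeftCLM_apply (A M : Matrix (Fin d) (Fin d) ℝ) :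
    mulLeftCLM A M = A * M := rfl

@[simp] lemma mulRightCLM_apply (A M : Matrix (Fin d) (Fin d) ℝ) :
    mulRightCLM A M = M * A := rfl

@[simp] lemma entryCLM_apply (i j : Fin d) (M : Matrix (Fin d) (Fin d) ℝ) :
    entryCLM i j M = M i j := rfl

theorem main (A : Matrix (Fin d) (Fin d) ℝ) (ω : ℝ)
    (hA : ∀ μ ∈ spectrum ℂ (A.map Complex.ofReal), μ.re < 0) :
    A * cosTransform A ω * A
      = -((1 / Real.pi) • A) - (ω ^ 2) • cosTransform A ω := by
  obtain ⟨C, ε, hC0, hε, hdecay⟩ := decay_real A hA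
  set E : ℝ → Matrix (Fin d) (Fin d) ℝ := fun t => NormedSpace.exp (t • A) with hE
  have hEcont : Continuous E :=
    NormedSpace.exp_continuous.comp (continuous_id.smul continuous_const)
  have hEderiv : ∀ t : ℝ, HasDerivAt E (A * E t) t := fun t =>
    hasDerivAt_exp_smul_const' (𝕂 := ℝ) A t
  have hcomm : ∀ t : ℝ, A * E t = E t * A := fun t =>
    (((Commute.refl A).smul_right t).exp_right).eq
  set fc : ℝ → Matrix (Fin d) (Fin d) ℝ := fun t => Real.cos (ω * t) • E t with hfc
  set fs : ℝ → Matrix (Fin d) (Fin d) ℝ := fun t => Real.sin (ω * t) • E t with hfs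
  -- basic continuity
  have hconcos : Continuous fun t : ℝ => Real.cos (ω * t) :=
    Real.continuous_cos.comp (continuous_const.mul continuous_id)
  have hconsin : Continuous fun t : ℝ => Real.sin (ω * t) :=
    Real.continuous_sin.comp (continuous_const.mul continuous_id)
  have hfccont : Continuous fc := hconcos.smul hEcont
  have hfscont : Continuous fs := hconsin.smul hEcont
  -- bounds
  have hbnd : ∀ (g : ℝ → ℝ), (∀ t, |g t| ≤ 1) → ∀ t : ℝ, 0 ≤ t →
      ‖g t • E t‖ ≤ C * Real.exp (-ε * t) := by
    intro g hg t ht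
    rw [norm_smul]
    calc ‖g t‖ * ‖E t‖ ≤ 1 * (C * Real.exp (-ε * t)) :=
          mul_le_mul (hg t) (hdecay t ht) (norm_nonneg _) zero_le_one
      _ = C * Real.exp (-ε * t) := one_mul _
  have hbndA : ∀ (g : ℝ → ℝ), (∀ t, |g t| ≤ 1) → ∀ t : ℝ, 0 ≤ t →
      ‖g t • (A * E t)‖ ≤ (‖A‖ * C) * Real.exp (-ε * t) := by
    intro g hg t ht
    rw [norm_smul]
    calc ‖g t‖ * ‖A * E t‖ ≤ 1 * (‖A‖ * ‖E t‖) :=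
          mul_le_mul (hg t) (norm_mul_le _ _) (norm_nonneg _) zero_le_one
      _ = ‖A‖ * ‖E t‖ := one_mul _
      _ ≤ ‖A‖ * (C * Real.exp (-ε * t)) :=
          mul_le_mul_of_nonneg_left (hdecay t ht) (norm_nonneg _)
      _ = (‖A‖ * C) * Real.exp (-ε * t) := by ring
  -- integrability
  have hfc_int : IntegrableOn fc (Set.Ioi (0:ℝ)) :=
    integrableOn_of_decay hfccont hε (hbnd _ fun t => Real.abs_cos_le_one _)
  have hfs_int : IntegrableOn fs (Set.Ioi (0:ℝ)) :=
    integrableOn_of_decay hfscont hε (hbnd _ fun t => Real.abs_sin_le_one _)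
  have hcAE_int : IntegrableOn (fun t => Real.cos (ω * t) • (A * E t)) (Set.Ioi (0:ℝ)) :=
    integrableOn_of_decay (hconcos.smul (continuous_const.mul hEcont)) hε
      (hbndA _ fun t => Real.abs_cos_le_one _)
  have hsAE_int : IntegrableOn (fun t => Real.sin (ω * t) • (A * E t)) (Set.Ioi (0:ℝ)) :=
    integrableOn_of_decay (hconsin.smul (continuous_const.mul hEcont)) hε
      (hbndA _ fun t => Real.abs_sin_le_one _)
  -- derivatives
  have hderiv_cos : ∀ t : ℝ, HasDerivAt (fun t => Real.cos (ω * t)) (-(ω * Real.sin (ω * t))) t := by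
    intro t
    have h := ((hasDerivAt_id t).const_mul ω).cos
    simp only [id_eq, mul_one] at h
    convert h using 1
    ring
  have hderiv_sin : ∀ t : ℝ, HasDerivAt (fun t => Real.sin (ω * t)) (ω * Real.cos (ω * t)) t := by
    intro t
    have h := ((hasDerivAt_id t).const_mul ω).sin
    simp only [id_eq, mul_one] at h
    convert h using 1
    ring
  have hfc' : ∀ t : ℝ, HasDerivAt fc
      ((-(ω * Real.sin (ω * t))) • E t + Real.cos (ω * t) • (A * E t)) t := fun t => by
    have h := (hderiv_cos t).smul (hEderiv t)
    rwa [add_comm] at h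
  have hfs' : ∀ t : ℝ, HasDerivAt fs
      ((ω * Real.cos (ω * t)) • E t + Real.sin (ω * t) • (A * E t)) t := fun t => by
    have h := (hderiv_sin t).smul (hEderiv t)
    rwa [add_comm] at h
  -- integrability of the derivatives
  have hrw1 : (fun t => (-(ω * Real.sin (ω * t))) • E t) = fun t => (-ω) • fs t := by
    funext t
    rw [hfs, smul_smul, neg_mul]
  have hfc'_int : IntegrableOn
      (fun t => (-(ω * Real.sin (ω * t))) • E t + Real.cos (ω * t) • (A * E t))
      (Set.Ioi (0:ℝ)) := by
    rw [show (fun t => (-(ω * Real.sin (ω * t))) • E t + Real.cos (ω * t) • (A * E t))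
        = fun t => (-ω) • fs t + Real.cos (ω * t) • (A * E t) by
      funext t; rw [congrFun hrw1 t]]
    exact ((hfs_int.smul (-ω)).congr (ae_of_all _ fun t => rfl)).add hcAE_int
  have hrw2 : (fun t => (ω * Real.cos (ω * t)) • E t) = fun t => ω • fc t := by
    funext t
    rw [hfc, smul_smul]
  have hfs'_int : IntegrableOn
      (fun t => (ω * Real.cos (ω * t)) • E t + Real.sin (ω * t) • (A * E t))
      (Set.Ioi (0:ℝ)) := by
    rw [show (fun t => (ω * Real.cos (ω * t)) • E t + Real.sin (ω * t) • (A * E t))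
        = fun t => ω • fc t + Real.sin (ω * t) • (A * E t) by
      funext t; rw [congrFun hrw2 t]]
    exact ((hfc_int.smul ω).congr (ae_of_all _ fun t => rfl)).add hsAE_int
  -- limits at infinity
  have hexp_tendsto : Tendsto (fun t : ℝ => C * Real.exp (-ε * t)) atTop (𝓝 0) := by
    have h1 : Tendsto (fun t : ℝ => -ε * t) atTop atBot :=
      tendsto_neg_atTop_atBot.comp (tendsto_id.const_mul_atTop hε) |>.congr
        (fun t => by simp [Function.comp])
    have h2 : Tendsto (fun t : ℝ => Real.exp (-ε * t)) atTop (𝓝 0) :=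
      Real.tendsto_exp_atBot.comp h1
    simpa using h2.const_mul C
  have htend : ∀ (g : ℝ → ℝ), (∀ t, |g t| ≤ 1) →
      Tendsto (fun t => g t • E t) atTop (𝓝 0) := by
    intro g hg
    refine squeeze_zero_norm' ?_ hexp_tendsto
    filter_upwards [eventually_ge_atTop (0:ℝ)] with t ht using hbnd g hg t ht
  have hsmul1 : IntegrableOn (fun t => (-ω) • fs t) (Set.Ioi (0:ℝ)) := hfs_int.smul (-ω)
  have hsmul2 : IntegrableOn (fun t => ω • fc t) (Set.Ioi (0:ℝ)) := hfc_int.smul ω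
  -- FTC
  set F : Matrix (Fin d) (Fin d) ℝ := ∫ t in Set.Ioi (0:ℝ), fc t with hF
  set G : Matrix (Fin d) (Fin d) ℝ := ∫ t in Set.Ioi (0:ℝ), fs t with hG
  have hfc0 : fc 0 = 1 := by
    simp [hfc, hE, NormedSpace.exp_zero]
  have hfs0 : fs 0 = 0 := by
    simp [hfs]
  have key1 : (∫ t in Set.Ioi (0:ℝ),
      ((-(ω * Real.sin (ω * t))) • E t + Real.cos (ω * t) • (A * E t)))
      = 0 - fc 0 :=
    integral_Ioi_of_hasDerivAt_of_tendsto hfccont.continuousWithinAt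
      (fun x _ => hfc' x) hfc'_int (htend _ fun t => Real.abs_cos_le_one _)
  have key2 : (∫ t in Set.Ioi (0:ℝ),
      ((ω * Real.cos (ω * t)) • E t + Real.sin (ω * t) • (A * E t)))
      = 0 - fs 0 :=
    integral_Ioi_of_hasDerivAt_of_tendsto hfscont.continuousWithinAt
      (fun x _ => hfs' x) hfs'_int (htend _ fun t => Real.abs_sin_le_one _)
  -- commuting integrals with CLMs
  have hAF : A * F = ∫ t in Set.Ioi (0:ℝ), Real.cos (ω * t) • (A * E t) := by
    have h := (mulLeftCLM A).integral_comp_comm hfc_int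
    have h2 : ∀ t : ℝ, mulLeftCLM A (fc t) = Real.cos (ω * t) • (A * E t) := fun t => by
      rw [mulLeftCLM_apply, hfc, mul_smul_comm]
    calc A * F = mulLeftCLM A F := rfl
      _ = ∫ t in Set.Ioi (0:ℝ), mulLeftCLM A (fc t) := h.symm
      _ = ∫ t in Set.Ioi (0:ℝ), Real.cos (ω * t) • (A * E t) := by
          exact integral_congr_ae (ae_of_all _ h2)
  have hAG : A * G = ∫ t in Set.Ioi (0:ℝ), Real.sin (ω * t) • (A * E t) := by
    have h := (mulLeftCLM A).integral_comp_comm hfs_int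
    have h2 : ∀ t : ℝ, mulLeftCLM A (fs t) = Real.sin (ω * t) • (A * E t) := fun t => by
      rw [mulLeftCLM_apply, hfs, mul_smul_comm]
    calc A * G = mulLeftCLM A G := rfl
      _ = ∫ t in Set.Ioi (0:ℝ), mulLeftCLM A (fs t) := h.symm
      _ = ∫ t in Set.Ioi (0:ℝ), Real.sin (ω * t) • (A * E t) := by
          exact integral_congr_ae (ae_of_all _ h2)
  have hFA : A * F = F * A := by
    have h := (mulRightCLM A).integral_comp_comm hfc_int
    have h2 : ∀ t : ℝ, mulRightCLM A (fc t) = Real.cos (ω * t) • (A * E t) := fun t => by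
      rw [mulRightCLM_apply, hfc, smul_mul_assoc, ← hcomm t]
    calc A * F = ∫ t in Set.Ioi (0:ℝ), Real.cos (ω * t) • (A * E t) := hAF
      _ = ∫ t in Set.Ioi (0:ℝ), mulRightCLM A (fc t) := by
          exact integral_congr_ae (ae_of_all _ fun t => (h2 t).symm)
      _ = mulRightCLM A F := h
      _ = F * A := rfl
  -- the two integral identities
  have eq1 : (-ω) • G + A * F = -(1 : Matrix (Fin d) (Fin d) ℝ) := by
    have hsplit : (∫ t in Set.Ioi (0:ℝ),
        ((-(ω * Real.sin (ω * t))) • E t + Real.cos (ω * t) • (A * E t)))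
        = (-ω) • G + A * F := by
      rw [show (fun t => (-(ω * Real.sin (ω * t))) • E t + Real.cos (ω * t) • (A * E t))
          = fun t => (-ω) • fs t + Real.cos (ω * t) • (A * E t) by
        funext t; rw [congrFun hrw1 t]]
      rw [integral_add hsmul1 hcAE_int, integral_smul, ← hAF, ← hG]
    rw [← hsplit, key1, hfc0]
    simp
  have eq2 : ω • F + A * G = 0 := by
    have hsplit : (∫ t in Set.Ioi (0:ℝ),
        ((ω * Real.cos (ω * t)) • E t + Real.sin (ω * t) • (A * E t)))
        = ω • F + A * G := by
      rw [show (fun t => (ω * Real.cos (ω * t)) • E t + Real.sin (ω * t) • (A * E t))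
          = fun t => ω • fc t + Real.sin (ω * t) • (A * E t) by
        funext t; rw [congrFun hrw2 t]]
      rw [integral_add hsmul2 hsAE_int, integral_smul, ← hAG, ← hF]
    rw [← hsplit, key2, hfs0]
    simp
  -- cosTransform in terms of F
  have hCT : cosTransform A ω = (1 / Real.pi) • F := by
    ext i j
    have hent : F i j = ∫ t in Set.Ioi (0:ℝ), Real.cos (ω * t) * E t i j := by
      have h := (entryCLM i j).integral_comp_comm hfc_int
      have h2 : ∀ t : ℝ, entryCLM i j (fc t) = Real.cos (ω * t) * E t i j := fun t => by
        rw [entryCLM_apply, hfc]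
        simp [Matrix.smul_apply]
      calc F i j = entryCLM i j F := rfl
        _ = ∫ t in Set.Ioi (0:ℝ), entryCLM i j (fc t) := h.symm
        _ = ∫ t in Set.Ioi (0:ℝ), Real.cos (ω * t) * E t i j := by
            exact integral_congr_ae (ae_of_all _ h2)
    show (1 / Real.pi) * (∫ t in Set.Ioi (0:ℝ),
        Real.cos (ω * t) * (NormedSpace.exp (t • A)) i j) = ((1 / Real.pi) • F) i j
    rw [Matrix.smul_apply, hent, smul_eq_mul]
  -- wrap up
  have hAFval : A * F = ω • G - 1 := by
    have h := eq_sub_of_add_eq' eq1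
    rw [h, neg_smul, sub_neg_eq_add]
    abel
  have hAGval : A * G = -(ω • F) := eq_neg_of_add_eq_zero_right eq2
  have hfinal : A * F * A = -(ω ^ 2) • F - A := by
    calc A * F * A = A * (F * A) := mul_assoc _ _ _
      _ = A * (A * F) := by rw [← hFA]
      _ = A * (ω • G - 1) := by rw [hAFval]
      _ = ω • (A * G) - A := by rw [mul_sub, mul_smul_comm, mul_one]
      _ = ω • (-(ω • F)) - A := by rw [hAGval]
      _ = -(ω ^ 2) • F - A := by
          rw [smul_neg, smul_smul, ← sq, neg_smul]
  rw [hCT]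
  rw [mul_smul_comm, smul_mul_assoc, hfinal]
  module

end CosTransformAux

/-- For a Hurwitz matrix `A` and `ω ∈ ℝ`,
`A Ŝ_A(ω) A = −(1/π) A − ω² Ŝ_A(ω)`. -/
theorem cosTransform_conj_by_A {d : ℕ}
    (A : Matrix (Fin d) (Fin d) ℝ) (ω : ℝ)
    (hA : ∀ μ ∈ spectrum ℂ (A.map Complex.ofReal), μ.re < 0) :
    A * cosTransform A ω * A
      = -((1 / Real.pi) • A) - (ω ^ 2) • cosTransform A ω :=
  CosTransformAux.main A ω hA
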